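/- Let n ≥ 2, c < 0, and let Γ be a cone satisfying condition (C) with λ* := (1,−1,…,−1) ∈ Γ. Then there exists α₀ > 0 such that for every α ∈ (0, α₀) there is r > 0 for which the function v(x) := α·log|x| + 2c·xₙ − 10c²·|x|² satisfies λ(A[v]) ∈ Γ in B_r⁺ \ {0} and ∂v/∂xₙ ≤ c·e^v on ∂′B_r \ {0}, while liminf_{x→0} v(x) = −∞. -/

import Mathlib

noncomputable section

open Filter Metric Polynomial MeasureTheory
open scoped Topology

namespace CLL

abbrev E (d : ℕ) := EuclideanSpace ℝ (Fin d)

/-- One-sided partial derivative (within a set `s`) in the `i`-th coordinate direction. -/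
def pd (d : ℕ) (s : Set (E d)) (v : E d → ℝ) (i : Fin d) (x : E d) : ℝ :=
  fderivWithin ℝ v s x (EuclideanSpace.single i 1)

/-- The Möbius Hessian `A[v] = e^{-2v} (-∇² v + ∇v ⊗ ∇v - |∇v|²/2 · I)`,
computed with derivatives within `s`. -/
def mHess (d : ℕ) (s : Set (E d)) (v : E d → ℝ) (x : E d) : Matrix (Fin d) (Fin d) ℝ :=
  fun i j =>
    Real.exp (-2 * v x) *
      (-(pd d s (fun y => pd d s v j y) i x)
        + pd d s v i x * pd d s v j x
        - (1 / 2) * (∑ k, (pd d s v k x) ^ 2) * (if i = j then (1 : ℝ) else 0))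

/-- `μ` lists the eigenvalues (with multiplicity, in some order) of the matrix `M`. -/
def IsEigList (d : ℕ) (M : Matrix (Fin d) (Fin d) ℝ) (μ : Fin d → ℝ) : Prop :=
  M.charpoly = ∏ i, (X - C (μ i))

/-- `λ* = (1, -1, …, -1)`. -/
def lamStar (d : ℕ) : Fin d → ℝ := fun i => if (i : ℕ) = 0 then 1 else -1

/-- Condition (C): `Γ ⊊ ℝⁿ` is a nonempty open symmetric cone with vertex at the origin
satisfying `Γ + Γₙ ⊆ Γ`. -/
def CondC (d : ℕ) (Γ : Set (Fin d → ℝ)) : Prop :=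
  Γ.Nonempty ∧ Γ ≠ Set.univ ∧ IsOpen Γ ∧
    (∀ t : ℝ, 0 < t → ∀ lam ∈ Γ, t • lam ∈ Γ) ∧
    (∀ σ : Equiv.Perm (Fin d), ∀ lam ∈ Γ, lam ∘ σ ∈ Γ) ∧
    (∀ lam ∈ Γ, ∀ μ : Fin d → ℝ, (∀ i, 0 < μ i) → lam + μ ∈ Γ)

/-- Condition (F): `f` is symmetric on `Γ`, locally Lipschitz, and for each compact
`K ⊆ Γ` its partial derivatives are bounded below a.e. on `K` by a positive constant. -/
def CondF (d : ℕ) (Γ : Set (Fin d → ℝ)) (f : (Fin d → ℝ) → ℝ) : Prop :=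
  (∀ σ : Equiv.Perm (Fin d), ∀ lam ∈ Γ, f (lam ∘ σ) = f lam) ∧
  (∀ lam ∈ Γ, ∃ K : NNReal, ∃ t ∈ nhdsWithin lam Γ, LipschitzOnWith K f t) ∧
  (∀ K : Set (Fin d → ℝ), K ⊆ Γ → IsCompact K →
    ∃ c > (0 : ℝ), ∀ᵐ lam ∂(volume.restrict K),
      ∀ i : Fin d, c ≤ lineDeriv ℝ f lam (Pi.single i 1))

/-- The index of the last coordinate. -/
def lastIdx (n : ℕ) : Fin (n + 2) := Fin.last (n + 1)

/-- The open upper half space `ℝⁿ₊`. -/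
def upperH (n : ℕ) : Set (E (n + 2)) := {x | 0 < x (lastIdx n)}

/-- The standard bubble `log (a / (1 + b |x - x̄|²))`. -/
def bubble (n : ℕ) (a b : ℝ) (xbar : E (n + 2)) (x : E (n + 2)) : ℝ :=
  Real.log (a / (1 + b * ‖x - xbar‖ ^ 2))

/-- The open upper half ball `B_r⁺`. -/
def Bplus (n : ℕ) (r : ℝ) : Set (E (n + 2)) := Metric.ball 0 r ∩ upperH n

/-- The set defining `μ_Γ⁻`. -/
def muSet (d : ℕ) (Γ : Set (Fin d → ℝ)) : Set ℝ :=
  {c : ℝ | (fun i : Fin d => if (i : ℕ) = 0 then c else -1) ∈ closure Γ}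

/-- `μ_Γ⁻ = inf { c : (c,-1,…,-1) ∈ closure Γ }`. -/
def muMinus (d : ℕ) (Γ : Set (Fin d → ℝ)) : ℝ :=
  sInf (muSet d Γ)

end CLL

open CLL

/-- The function of the second counterexample in Example 2.1 of the paper. -/
def v6 (n : ℕ) (α c : ℝ) (x : E (n + 2)) : ℝ :=
  α * Real.log ‖x‖ + 2 * c * x (lastIdx n) - 10 * c ^ 2 * ‖x‖ ^ 2


/-! ### Auxiliary development for `stmt6` -/

section Stmt6Aux

open Matrix
open CLL

namespace CL6

variable {d : ℕ}

/-- `NN x = ∑ x k ^ 2 = ‖x‖²`. -/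
def NN (d : ℕ) (x : E d) : ℝ := ∑ k, x k ^ 2

def DN (d : ℕ) (x : E d) : E d →L[ℝ] ℝ := ∑ k, (2 * x k) • EuclideanSpace.proj k

lemma NN_eq (x : E d) : NN d x = ‖x‖ ^ 2 := by
  rw [EuclideanSpace.norm_eq, Real.sq_sqrt (by positivity)]
  simp [NN, sq_abs]

lemma NN_pos {x : E d} (hx : x ≠ 0) : 0 < NN d x := by
  have h : 0 < ‖x‖ := norm_pos_iff.mpr hx
  rw [NN_eq]; positivity

lemma hasFDerivAt_NN (x : E d) : HasFDerivAt (NN d) (DN d x) x := by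
  have : HasFDerivAt (fun y : E d => ∑ k, y k ^ 2)
      (∑ k : Fin d, (2 * x k) • EuclideanSpace.proj (𝕜 := ℝ) k) x := by
    apply HasFDerivAt.fun_sum
    intro k _
    have h := ((EuclideanSpace.proj (𝕜 := ℝ) k).hasFDerivAt (x := x)).mul
      ((EuclideanSpace.proj (𝕜 := ℝ) k).hasFDerivAt (x := x))
    have h2 : (⇑(EuclideanSpace.proj (𝕜 := ℝ) k) *
        ⇑(EuclideanSpace.proj (𝕜 := ℝ) k) : E d → ℝ) = fun y : E d => y k ^ 2 := by
      funext y; simp [sq]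
    rw [h2] at h
    refine h.congr_fderiv ?_
    ext v
    simp [two_mul, add_smul]
  exact this

lemma DN_single (x : E d) (j : Fin d) : DN d x (EuclideanSpace.single j 1) = 2 * x j := by
  simp only [DN, ContinuousLinearMap.sum_apply, ContinuousLinearMap.smul_apply,
    PiLp.proj_apply, EuclideanSpace.single_apply]
  rw [Finset.sum_eq_single j] <;> simp +contextual

/-- the explicit gradient of `v6` -/
def grad (n : ℕ) (α c : ℝ) (j : Fin (n + 2)) (x : E (n + 2)) : ℝ :=
  α * (x j * (NN (n + 2) x)⁻¹) + (if j = lastIdx n then 2 * c else 0) - 20 * c ^ 2 * x j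

lemma v6_eq (n : ℕ) (α c : ℝ) :
    v6 n α c = fun x => α / 2 * Real.log (NN (n + 2) x) + 2 * c * x (lastIdx n)
      - 10 * c ^ 2 * NN (n + 2) x := by
  funext x
  rw [NN_eq, v6, Real.log_pow]
  push_cast
  ring

lemma hasFDerivAt_v6 (n : ℕ) (α c : ℝ) {x : E (n + 2)} (hx : x ≠ 0) :
    HasFDerivAt (v6 n α c)
      (((α / 2) • ((NN (n + 2) x)⁻¹ • DN (n + 2) x)
        + (2 * c) • (EuclideanSpace.proj (𝕜 := ℝ) (lastIdx n)))
        - (10 * c ^ 2) • DN (n + 2) x) x := by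
  have hx' : NN (n + 2) x ≠ 0 := (NN_pos hx).ne'
  have hN := hasFDerivAt_NN (d := n + 2) x
  have hlog : HasFDerivAt (fun y : E (n + 2) => Real.log (NN (n + 2) y))
      ((NN (n + 2) x)⁻¹ • DN (n + 2) x) x :=
    (Real.hasDerivAt_log hx').comp_hasFDerivAt x hN
  have hproj : HasFDerivAt (fun y : E (n + 2) => y (lastIdx n))
      (EuclideanSpace.proj (𝕜 := ℝ) (lastIdx n)) x :=
    (EuclideanSpace.proj (𝕜 := ℝ) (lastIdx n)).hasFDerivAt
  rw [v6_eq]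
  exact ((hlog.const_mul (α / 2)).add (hproj.const_mul (2 * c))).sub (hN.const_mul (10 * c ^ 2))

lemma pd_v6 (n : ℕ) (α c : ℝ) {x : E (n + 2)} (hx : x ≠ 0) (j : Fin (n + 2)) :
    pd (n + 2) {(0 : E (n + 2))}ᶜ (v6 n α c) j x = grad n α c j x := by
  rw [pd, fderivWithin_of_isOpen isOpen_compl_singleton (by simpa using hx),
    (hasFDerivAt_v6 n α c hx).fderiv]
  simp only [ContinuousLinearMap.sub_apply, ContinuousLinearMap.add_apply,
    ContinuousLinearMap.smul_apply, DN_single, PiLp.proj_apply, EuclideanSpace.single_apply,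
    smul_eq_mul, grad]
  by_cases h : j = lastIdx n
  · subst h; simp; ring
  · rw [if_neg (fun hh => h hh.symm), if_neg h]; ring

lemma hasFDerivAt_grad (n : ℕ) (α c : ℝ) {x : E (n + 2)} (hx : x ≠ 0) (j : Fin (n + 2)) :
    HasFDerivAt (grad n α c j)
      ((α • ((x j) • ((-((NN (n + 2) x) ^ 2)⁻¹) • DN (n + 2) x)
          + (NN (n + 2) x)⁻¹ • (EuclideanSpace.proj (𝕜 := ℝ) j)))
        - (20 * c ^ 2) • (EuclideanSpace.proj (𝕜 := ℝ) j)) x := by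
  have hx' : NN (n + 2) x ≠ 0 := (NN_pos hx).ne'
  have hN := hasFDerivAt_NN (d := n + 2) x
  have hinv : HasFDerivAt (fun y : E (n + 2) => (NN (n + 2) y)⁻¹)
      ((-((NN (n + 2) x) ^ 2)⁻¹) • DN (n + 2) x) x :=
    (hasDerivAt_inv hx').comp_hasFDerivAt x hN
  have hj : HasFDerivAt (fun y : E (n + 2) => y j)
      (EuclideanSpace.proj (𝕜 := ℝ) j) x := (EuclideanSpace.proj (𝕜 := ℝ) j).hasFDerivAt
  have hmul : HasFDerivAt (fun y : E (n + 2) => y j * (NN (n + 2) y)⁻¹)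
      ((x j) • ((-((NN (n + 2) x) ^ 2)⁻¹) • DN (n + 2) x)
        + (NN (n + 2) x)⁻¹ • (EuclideanSpace.proj (𝕜 := ℝ) j)) x := hj.mul hinv
  exact ((hmul.const_mul α).add_const (if j = lastIdx n then 2 * c else 0)).sub
    (hj.const_mul (20 * c ^ 2))

lemma pd_pd_v6 (n : ℕ) (α c : ℝ) {x : E (n + 2)} (hx : x ≠ 0) (i j : Fin (n + 2)) :
    pd (n + 2) {(0 : E (n + 2))}ᶜ
      (fun y => pd (n + 2) {(0 : E (n + 2))}ᶜ (v6 n α c) j y) i x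
    = α * (x j * (-((NN (n + 2) x) ^ 2)⁻¹) * (2 * x i)
        + (NN (n + 2) x)⁻¹ * (if i = j then 1 else 0))
      - 20 * c ^ 2 * (if i = j then 1 else 0) := by
  have hmem : {(0 : E (n + 2))}ᶜ ∈ 𝓝 x := compl_singleton_mem_nhds hx
  have heq : (fun y => pd (n + 2) {(0 : E (n + 2))}ᶜ (v6 n α c) j y)
      =ᶠ[𝓝 x] grad n α c j := by
    filter_upwards [hmem] with y hy
    exact pd_v6 n α c (by simpa using hy) j
  rw [pd, fderivWithin_of_isOpen isOpen_compl_singleton (by simpa using hx),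
    heq.fderiv_eq, (hasFDerivAt_grad n α c hx j).fderiv]
  simp only [ContinuousLinearMap.sub_apply, ContinuousLinearMap.add_apply,
    ContinuousLinearMap.smul_apply, DN_single, PiLp.proj_apply, EuclideanSpace.single_apply,
    smul_eq_mul]
  by_cases h : i = j
  · subst h; simp only [if_pos rfl]; ring
  · rw [if_neg (fun hh => h hh.symm), if_neg h]; ring

/-! ### Spectral lemmas -/

lemma dot_self_pos {w : Fin d → ℝ} (hw : w ≠ 0) : 0 < w ⬝ᵥ w := by
  obtain ⟨k, hk⟩ := Function.ne_iff.mp hw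
  have h1 : (0:ℝ) < w k * w k := mul_self_pos.mpr hk
  calc (0:ℝ) < w k * w k := h1
    _ ≤ ∑ i, w i * w i := Finset.single_le_sum (f := fun i => w i * w i)
        (fun i _ => mul_self_nonneg _) (Finset.mem_univ k)

lemma charmatrix_eq (M : Matrix (Fin d) (Fin d) ℝ) :
    charmatrix M = (X : ℝ[X]) • (1 : Matrix (Fin d) (Fin d) ℝ[X])
      - M.map ⇑(C : ℝ →+* ℝ[X]) := by
  ext i j
  by_cases h : i = j
  · subst h; simp [charmatrix_apply_eq, Matrix.one_apply]
  · simp [charmatrix_apply_ne _ _ _ h, Matrix.one_apply_ne h]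

lemma charpoly_conj (U A : Matrix (Fin d) (Fin d) ℝ) (hU : U * star U = 1)
    (hU' : star U * U = 1) : (U * A * star U).charpoly = A.charpoly := by
  have hc : charmatrix (U * A * star U)
      = (U.map ⇑(C : ℝ →+* ℝ[X])) * charmatrix A * ((star U).map ⇑(C : ℝ →+* ℝ[X])) := by
    rw [charmatrix_eq, charmatrix_eq, Matrix.mul_sub, Matrix.sub_mul]
    congr 1
    · rw [mul_smul_comm, smul_mul_assoc, Matrix.mul_one, ← Matrix.map_mul, hU, Matrix.map_one _
        (map_zero _) (map_one _)]
    · rw [← Matrix.map_mul, ← Matrix.map_mul]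
  rw [Matrix.charpoly, Matrix.charpoly, hc, det_mul, det_mul, mul_comm, ← mul_assoc,
    ← det_mul, ← Matrix.map_mul, hU', Matrix.map_one _ (map_zero _) (map_one _), det_one, one_mul]

lemma charpoly_diagonal (f : Fin d → ℝ) :
    (diagonal f).charpoly = ∏ i, (X - C (f i)) := by
  rw [Matrix.charpoly_of_upperTriangular _ (Matrix.blockTriangular_diagonal f)]
  simp

variable {A : Matrix (Fin d) (Fin d) ℝ}

lemma charpoly_eq_prod (hA : A.IsHermitian) :
    A.charpoly = ∏ i, (X - C (hA.eigenvalues i)) := by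
  conv_lhs => rw [hA.spectral_theorem, Unitary.conjStarAlgAut_apply]
  rw [charpoly_conj _ _ (mem_unitaryGroup_iff.mp (Matrix.IsHermitian.eigenvectorUnitary hA).2)
    (mem_unitaryGroup_iff'.mp (Matrix.IsHermitian.eigenvectorUnitary hA).2)]
  rw [RCLike.ofReal_real_eq_id, Function.id_comp, charpoly_diagonal]

lemma eig_gt_of_posdef (hA : A.IsHermitian) (s : ℝ)
    (h : ∀ ξ : Fin d → ℝ, ξ ≠ 0 → 0 < ξ ⬝ᵥ (A *ᵥ ξ) + s * (ξ ⬝ᵥ ξ)) :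
    ∀ i, -s < hA.eigenvalues i := by
  intro i
  set w : Fin d → ℝ := (WithLp.equiv 2 ((i : Fin d) → ℝ)) (hA.eigenvectorBasis i) with hwdef
  have hw : A *ᵥ w = hA.eigenvalues i • w := hA.mulVec_eigenvectorBasis i
  have hw0 : w ≠ 0 := by
    intro h0
    have : hA.eigenvectorBasis i = 0 := by
      apply (WithLp.equiv 2 ((i : Fin d) → ℝ)).injective
      simpa [hwdef] using h0
    exact hA.eigenvectorBasis.toBasis.ne_zero i (by simpa using this)
  have hpos := h w hw0
  rw [hw, dotProduct_smul] at hpos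
  have ht := dot_self_pos hw0
  have : 0 < (hA.eigenvalues i + s) * (w ⬝ᵥ w) := by
    rw [add_mul]; simpa [smul_eq_mul] using hpos
  nlinarith

lemma exists_eig_gt (hA : A.IsHermitian) (s : ℝ) (ξ : Fin d → ℝ)
    (h : s * (ξ ⬝ᵥ ξ) < ξ ⬝ᵥ (A *ᵥ ξ)) :
    ∃ i, s < hA.eigenvalues i := by
  by_contra hcon
  push_neg at hcon
  set U : Matrix (Fin d) (Fin d) ℝ :=
    (Matrix.IsHermitian.eigenvectorUnitary hA : Matrix (Fin d) (Fin d) ℝ)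
  have hU : U * star U = 1 := mem_unitaryGroup_iff.mp (Matrix.IsHermitian.eigenvectorUnitary hA).2
  have hsp : A = U * diagonal hA.eigenvalues * star U := by
    simpa [RCLike.ofReal_real_eq_id, Function.id_comp] using hA.spectral_theorem
  have hB : s • (1 : Matrix (Fin d) (Fin d) ℝ) - A
      = U * diagonal (fun i => s - hA.eigenvalues i) * star U := by
    have hdiag : diagonal (fun i => s - hA.eigenvalues i)
        = s • (1 : Matrix (Fin d) (Fin d) ℝ) - diagonal hA.eigenvalues := by
      ext i j
      by_cases h : i = j
      · subst h; simp [Matrix.one_apply]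
      · simp [diagonal_apply_ne _ h, Matrix.one_apply_ne h]
    rw [hdiag, Matrix.mul_sub, Matrix.sub_mul]
    rw [mul_smul_comm, Matrix.mul_one, smul_mul_assoc, hU]
    rw [← hsp]
  have hPSD : (s • (1 : Matrix (Fin d) (Fin d) ℝ) - A).PosSemidef := by
    rw [hB]
    have := Matrix.PosSemidef.mul_mul_conjTranspose_same
      (Matrix.posSemidef_diagonal_iff.mpr (fun i => sub_nonneg.mpr (hcon i))) U
    rwa [← Matrix.star_eq_conjTranspose] at this
  have h2 := hPSD.dotProduct_mulVec_nonneg ξ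
  rw [Matrix.sub_mulVec, Matrix.smul_mulVec, Matrix.one_mulVec, dotProduct_sub,
    dotProduct_smul] at h2
  simp only [star_trivial, smul_eq_mul] at h2
  linarith

/-! ### Gamma membership -/

lemma gamma_mem (n : ℕ) (Γ : Set (Fin (n + 2) → ℝ)) (hC : CondC (n + 2) Γ)
    (hstar : lamStar (n + 2) ∈ Γ) (ev : Fin (n + 2) → ℝ) (s : ℝ) (hs : 0 < s)
    (hlow : ∀ i, -s < ev i) (hhigh : ∃ i, s < ev i) : ev ∈ Γ := by
  obtain ⟨i₀, hi₀⟩ := hhigh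
  set σ : Equiv.Perm (Fin (n + 2)) := Equiv.swap 0 i₀ with hσ
  have hscaled : s • lamStar (n + 2) ∈ Γ := hC.2.2.2.1 s hs _ hstar
  set μ : Fin (n + 2) → ℝ := fun i => ev (σ i) - s * lamStar (n + 2) i with hμ
  have hμpos : ∀ i, 0 < μ i := by
    intro i
    by_cases h : (i : ℕ) = 0
    · have h0 : i = 0 := Fin.ext h
      subst h0
      have hσ0 : σ 0 = i₀ := Equiv.swap_apply_left 0 i₀
      have hls : lamStar (n + 2) (0 : Fin (n + 2)) = 1 := by simp [lamStar]
      simp only [hμ, hσ0, hls]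
      linarith
    · have hl : lamStar (n + 2) i = -1 := by simp [lamStar, h]
      simp only [hμ, hl]
      have := hlow (σ i)
      linarith
  have hkey : (fun i => ev (σ i)) = s • lamStar (n + 2) + μ := by
    funext i
    simp only [Pi.add_apply, Pi.smul_apply, hμ, smul_eq_mul]
    ring
  have h1 : (fun i => ev (σ i)) ∈ Γ := by
    rw [hkey]
    exact hC.2.2.2.2.2 _ hscaled μ hμpos
  have h2 := hC.2.2.2.2.1 σ⁻¹ _ h1
  have h3 : ((fun i => ev (σ i)) ∘ ⇑σ⁻¹) = ev := by
    funext j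
    simp [Function.comp]
  rwa [h3] at h2

/-! ### Matrix representation of the Möbius Hessian of v6 -/

lemma dot_vecMulVec (a b ξ : Fin d → ℝ) :
    ξ ⬝ᵥ (Matrix.vecMulVec a b *ᵥ ξ) = (ξ ⬝ᵥ a) * (b ⬝ᵥ ξ) := by
  have h : Matrix.vecMulVec a b *ᵥ ξ = fun i => a i * (b ⬝ᵥ ξ) := by
    funext i
    simp [Matrix.mulVec, Matrix.vecMulVec_apply, dotProduct, Finset.mul_sum, mul_assoc]
  rw [h]
  simp [dotProduct, Finset.sum_mul, mul_assoc]

lemma mHess_repr (n : ℕ) (α c : ℝ) {x : E (n + 2)} (hx : x ≠ 0) :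
    mHess (n + 2) {(0 : E (n + 2))}ᶜ (v6 n α c) x
      = Real.exp (-2 * v6 n α c x) •
        ((2 * α * ((NN (n + 2) x) ^ 2)⁻¹) •
            Matrix.vecMulVec (fun k => x k) (fun k => x k)
          + Matrix.vecMulVec (fun k => grad n α c k x) (fun k => grad n α c k x)
          + (20 * c ^ 2 - α * (NN (n + 2) x)⁻¹
              - (1 / 2) * ∑ k, (grad n α c k x) ^ 2) •
            (1 : Matrix (Fin (n + 2)) (Fin (n + 2)) ℝ)) := by
  ext i j
  simp only [mHess, pd_pd_v6 n α c hx, pd_v6 n α c hx, Matrix.smul_apply, Matrix.add_apply,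
    Matrix.vecMulVec_apply, Matrix.one_apply, smul_eq_mul]
  by_cases h : i = j
  · subst h; simp only [if_pos rfl]; ring
  · rw [if_neg h]; ring

lemma mHess_isHermitian (n : ℕ) (α c : ℝ) {x : E (n + 2)} (hx : x ≠ 0) :
    (mHess (n + 2) {(0 : E (n + 2))}ᶜ (v6 n α c) x).IsHermitian := by
  rw [mHess_repr n α c hx]
  show _ᴴ = _
  ext i j
  simp only [Matrix.conjTranspose_apply, Matrix.smul_apply, Matrix.add_apply,
    Matrix.vecMulVec_apply, Matrix.one_apply, smul_eq_mul, star_trivial]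
  by_cases h : i = j
  · subst h; ring
  · rw [if_neg h, if_neg (fun hh => h hh.symm)]; ring

end CL6

end Stmt6Aux

open scoped Matrix in
set_option maxHeartbeats 2000000 in
/-- Counterexamples with boundary condition `∂v/∂xₙ ≤ c e^v` for `c < 0`
(Example 2.1 of the paper). -/
theorem stmt6 (n : ℕ) (c : ℝ) (hc : c < 0) (Γ : Set (Fin (n + 2) → ℝ))
    (hC : CondC (n + 2) Γ) (hstar : lamStar (n + 2) ∈ Γ) :
    ∃ α₀ > (0 : ℝ), ∀ α : ℝ, 0 < α → α < α₀ → ∃ r > (0 : ℝ),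
      (∀ x ∈ Bplus n r, x ≠ 0 → ∃ ev : Fin (n + 2) → ℝ,
        IsEigList (n + 2) (mHess (n + 2) {(0 : E (n + 2))}ᶜ (v6 n α c) x) ev ∧ ev ∈ Γ) ∧
      (∀ x : E (n + 2), ‖x‖ < r → x (lastIdx n) = 0 → x ≠ 0 →
        pd (n + 2) {(0 : E (n + 2))}ᶜ (v6 n α c) (lastIdx n) x
          ≤ c * Real.exp (v6 n α c x)) ∧
      (∀ m : ℝ, ∃ᶠ x in 𝓝[Bplus n r] (0 : E (n + 2)), v6 n α c x < m) := by
  classical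
  have hc2 : (0:ℝ) < c ^ 2 := by nlinarith
  refine ⟨1, one_pos, ?_⟩
  intro α hα hα1
  set ι := lastIdx n
  refine ⟨min 1 (Real.sqrt (α / (20 * c ^ 2))), ?_, ?_, ?_, ?_⟩
  · have : (0:ℝ) < Real.sqrt (α / (20 * c ^ 2)) := Real.sqrt_pos.mpr (by positivity)
    exact lt_min one_pos this
  · -- eigenvalues in Γ
    rintro x ⟨hxball, _hxup⟩ hx0
    set A := mHess (n + 2) {(0 : E (n + 2))}ᶜ (v6 n α c) x with hAdef
    have hA : A.IsHermitian := CL6.mHess_isHermitian n α c hx0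
    have hNx : 0 < CL6.NN (n + 2) x := CL6.NN_pos hx0
    -- smallness: 20 c² N < α
    have hxr : ‖x‖ < Real.sqrt (α / (20 * c ^ 2)) := by
      have := mem_ball_zero_iff.mp hxball
      exact lt_of_lt_of_le this (min_le_right _ _)
    have hsmall : 20 * c ^ 2 * CL6.NN (n + 2) x < α := by
      have h2 : ‖x‖ ^ 2 < α / (20 * c ^ 2) := by
        have hnn : (0:ℝ) ≤ ‖x‖ := norm_nonneg x
        nlinarith [Real.sq_sqrt (le_of_lt (show (0:ℝ) < α / (20 * c ^ 2) by positivity)),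
          Real.sqrt_nonneg (α / (20 * c ^ 2))]
      have h3 : 20 * c ^ 2 * ‖x‖ ^ 2 < 20 * c ^ 2 * (α / (20 * c ^ 2)) :=
        mul_lt_mul_of_pos_left h2 (by positivity)
      have h4 : 20 * c ^ 2 * (α / (20 * c ^ 2)) = α := by have hc0 : c ≠ 0 := hc.ne; field_simp
      rw [CL6.NN_eq]
      linarith
    -- abbreviations
    set Nx := CL6.NN (n + 2) x with hNxdef
    set g : Fin (n + 2) → ℝ := fun k => CL6.grad n α c k x with hgdef
    set xv := (fun k => x k : Fin (n + 2) → ℝ) with hxvdef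
    set S := ∑ k, (g k) ^ 2 with hSdef
    set ee := Real.exp (-2 * v6 n α c x) with heedef
    have hee : 0 < ee := Real.exp_pos _
    set q : ℝ := α * Nx⁻¹ - 20 * c ^ 2 with hqdef
    have hglin : ∀ k, g k = q * x k + (if k = ι then 2 * c else 0) := by
      intro k
      simp only [hgdef, CL6.grad, hqdef]
      ring
    have hxx : xv ⬝ᵥ xv = Nx := by
      simp [dotProduct, hxvdef, hNxdef, CL6.NN, pow_two]
    have hG : g ⬝ᵥ xv = q * Nx + 2 * c * x ι := by
      have : ∀ k, g k * xv k = q * (x k * x k) + (if k = ι then 2 * c * x k else 0) := by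
        intro k
        rw [hglin k]
        by_cases h : k = ι
        · subst h; simp only [if_pos rfl, eq_self_iff_true, if_true]; ring
        · simp only [if_neg h]; ring
      simp only [dotProduct, this, Finset.sum_add_distrib, ← Finset.mul_sum,
        Finset.sum_ite_eq' Finset.univ, Finset.mem_univ, if_true]
      simp [hNxdef, CL6.NN, pow_two]
    have hS : S = q ^ 2 * Nx + 4 * c * q * x ι + 4 * c ^ 2 := by
      have : ∀ k, (g k) ^ 2
          = q ^ 2 * (x k ^ 2) + (if k = ι then 4 * c * q * x k + 4 * c ^ 2 else 0) := by
        intro k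
        rw [hglin k]
        by_cases h : k = ι
        · subst h; simp only [if_pos rfl, eq_self_iff_true, if_true]; ring
        · simp only [if_neg h]; ring
      simp only [hSdef, this, Finset.sum_add_distrib, ← Finset.mul_sum,
        Finset.sum_ite_eq' Finset.univ, Finset.mem_univ, if_true]
      simp only [hNxdef, CL6.NN]
      ring
    have hSnn : 0 ≤ S := Finset.sum_nonneg fun k _ => sq_nonneg _
    -- quadratic form identity
    have hq : ∀ ξ : Fin (n + 2) → ℝ, ξ ⬝ᵥ (A *ᵥ ξ)
        = ee * ((2 * α * (Nx ^ 2)⁻¹) * ((ξ ⬝ᵥ xv) * (xv ⬝ᵥ ξ)) + (ξ ⬝ᵥ g) * (g ⬝ᵥ ξ)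
          + (20 * c ^ 2 - α * Nx⁻¹ - (1 / 2) * S) * (ξ ⬝ᵥ ξ)) := by
      intro ξ
      rw [hAdef, CL6.mHess_repr n α c hx0]
      rw [Matrix.smul_mulVec, Matrix.add_mulVec, Matrix.add_mulVec,
        Matrix.smul_mulVec, Matrix.smul_mulVec, Matrix.one_mulVec]
      rw [dotProduct_smul, dotProduct_add, dotProduct_add, dotProduct_smul, dotProduct_smul,
        CL6.dot_vecMulVec, CL6.dot_vecMulVec]
      simp only [smul_eq_mul, ← hNxdef, ← hgdef, ← hxvdef, ← hSdef, ← heedef]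
      rfl
    set s : ℝ := ee * (α * Nx⁻¹ + (1 / 2) * S - 10 * c ^ 2) with hsdef
    clear_value A Nx g xv S ee q s
    have hαN : 20 * c ^ 2 < α * Nx⁻¹ := by
      rw [← div_eq_mul_inv, lt_div_iff₀ hNx]
      exact hsmall
    have hspos : 0 < s := by
      rw [hsdef]
      apply mul_pos hee
      nlinarith
    -- positive definiteness of A + s
    have hposdef : ∀ ξ : Fin (n + 2) → ℝ, ξ ≠ 0 → 0 < ξ ⬝ᵥ (A *ᵥ ξ) + s * (ξ ⬝ᵥ ξ) := by
      intro ξ hξ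
      rw [hq ξ, hsdef]
      have hQ : 0 < ξ ⬝ᵥ ξ := CL6.dot_self_pos hξ
      have h1 : 0 ≤ (ξ ⬝ᵥ xv) * (xv ⬝ᵥ ξ) := by
        rw [dotProduct_comm]; exact mul_self_nonneg _
      have h2 : 0 ≤ (ξ ⬝ᵥ g) * (g ⬝ᵥ ξ) := by
        rw [dotProduct_comm]; exact mul_self_nonneg _
      have h3 : 0 < (2 * α * (Nx ^ 2)⁻¹) := by positivity
      have hkey : ee * ((2 * α * (Nx ^ 2)⁻¹) * ((ξ ⬝ᵥ xv) * (xv ⬝ᵥ ξ)) + (ξ ⬝ᵥ g) * (g ⬝ᵥ ξ)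
            + (20 * c ^ 2 - α * Nx⁻¹ - (1 / 2) * S) * (ξ ⬝ᵥ ξ))
          + ee * (α * Nx⁻¹ + (1 / 2) * S - 10 * c ^ 2) * (ξ ⬝ᵥ ξ)
          = ee * ((2 * α * (Nx ^ 2)⁻¹) * ((ξ ⬝ᵥ xv) * (xv ⬝ᵥ ξ)) + (ξ ⬝ᵥ g) * (g ⬝ᵥ ξ)
            + 10 * c ^ 2 * (ξ ⬝ᵥ ξ)) := by ring
      rw [hkey]
      apply mul_pos hee
      have h4 : 0 < 10 * c ^ 2 * (ξ ⬝ᵥ ξ) := by positivity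
      nlinarith
    -- witness for large eigenvalue
    have hwitness : s * (xv ⬝ᵥ xv) < xv ⬝ᵥ (A *ᵥ xv) := by
      rw [hq xv, hxx, dotProduct_comm xv g, hG, hsdef, hS]
      have hNne : Nx ≠ 0 := hNx.ne'
      have hkey : ee * (2 * α * (Nx ^ 2)⁻¹ * (Nx * Nx)
            + (q * Nx + 2 * c * x ι) * (q * Nx + 2 * c * x ι)
            + (20 * c ^ 2 - α * Nx⁻¹
              - 1 / 2 * (q ^ 2 * Nx + 4 * c * q * x ι + 4 * c ^ 2)) * Nx)
          - ee * (α * Nx⁻¹ + 1 / 2 * (q ^ 2 * Nx + 4 * c * q * x ι + 4 * c ^ 2)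
              - 10 * c ^ 2) * Nx
          = ee * (4 * c ^ 2 * (x ι) ^ 2 + 26 * c ^ 2 * Nx) := by
        have h1 : (Nx ^ 2)⁻¹ * (Nx * Nx) = 1 := by
          rw [← sq]; exact inv_mul_cancel₀ (pow_ne_zero 2 hNne)
        have h2 : Nx⁻¹ * Nx = 1 := inv_mul_cancel₀ hNne
        linear_combination (ee * 2 * α) * h1 - (ee * 2 * α) * h2
      have hpos2 : 0 < ee * (4 * c ^ 2 * (x ι) ^ 2 + 26 * c ^ 2 * Nx) := by
        have : 0 < 4 * c ^ 2 * (x ι) ^ 2 + 26 * c ^ 2 * Nx := by nlinarith [sq_nonneg (x ι)]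
        positivity
      linarith [hkey, hpos2]
    -- conclude
    refine ⟨hA.eigenvalues, CL6.charpoly_eq_prod hA, ?_⟩
    exact CL6.gamma_mem n Γ hC hstar hA.eigenvalues s hspos
      (CL6.eig_gt_of_posdef hA s hposdef)
      (CL6.exists_eig_gt hA s xv hwitness)
  · -- boundary condition
    intro x hxr hxι hx0
    rw [CL6.pd_v6 n α c hx0 (lastIdx n)]
    have hgr : CL6.grad n α c (lastIdx n) x = 2 * c := by
      simp only [CL6.grad, (show x (lastIdx n) = 0 from hxι), if_pos rfl, eq_self_iff_true, if_true]
      ring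
    rw [hgr]
    have hx1 : ‖x‖ ≤ 1 := le_of_lt (lt_of_lt_of_le hxr (min_le_left _ _))
    have hv : v6 n α c x ≤ 0 := by
      rw [v6, (show x (lastIdx n) = 0 from hxι)]
      have hlog : Real.log ‖x‖ ≤ 0 := Real.log_nonpos (norm_nonneg x) hx1
      nlinarith [norm_nonneg x, sq_nonneg ‖x‖]
    have hexp : Real.exp (v6 n α c x) ≤ 1 := Real.exp_le_one_iff.mpr hv
    nlinarith [Real.exp_pos (v6 n α c x)]
  · -- lim inf is -infty
    intro m
    set r := min 1 (Real.sqrt (α / (20 * c ^ 2))) with hrdef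
    have hr : 0 < r := by
      have : (0:ℝ) < Real.sqrt (α / (20 * c ^ 2)) := Real.sqrt_pos.mpr (by positivity)
      exact lt_min one_pos this
    set f : ℝ → E (n + 2) := fun δ => EuclideanSpace.single (lastIdx n) δ with hfdef
    have hnorm : ∀ δ : ℝ, ‖f δ‖ = |δ| := by
      intro δ
      simp [hfdef, EuclideanSpace.norm_single]
    have htend0 : Tendsto f (𝓝[Set.Ioi (0:ℝ)] 0) (𝓝 (0 : E (n + 2))) := by
      rw [tendsto_zero_iff_norm_tendsto_zero]
      simp only [hnorm]
      have : Tendsto (fun δ : ℝ => |δ|) (𝓝 (0:ℝ)) (𝓝 (0:ℝ)) :=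
        (continuous_abs.tendsto' 0 0 abs_zero)
      exact this.mono_left nhdsWithin_le_nhds
    have hmem : ∀ᶠ δ in 𝓝[Set.Ioi (0:ℝ)] 0, f δ ∈ Bplus n r := by
      filter_upwards [Ioo_mem_nhdsGT_of_mem (Set.mem_Ico.mpr ⟨le_refl 0, hr⟩)] with δ hδ
      obtain ⟨hδ0, hδr⟩ := hδ
      constructor
      · rw [mem_ball_zero_iff, hnorm, abs_of_pos hδ0]; exact hδr
      · show 0 < (f δ) (lastIdx n)
        simp [hfdef, EuclideanSpace.single_apply, hδ0]
    have htend : Tendsto f (𝓝[Set.Ioi (0:ℝ)] 0) (𝓝[Bplus n r] (0 : E (n + 2))) := by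
      rw [tendsto_nhdsWithin_iff]
      exact ⟨htend0, hmem⟩
    have hval : ∀ᶠ δ in 𝓝[Set.Ioi (0:ℝ)] 0, v6 n α c (f δ) < m := by
      have hlogev : ∀ᶠ δ in 𝓝[Set.Ioi (0:ℝ)] 0, Real.log δ < m / α :=
        Real.tendsto_log_nhdsGT_zero.eventually (eventually_lt_atBot (m / α))
      filter_upwards [hlogev, Ioo_mem_nhdsGT_of_mem (Set.mem_Ico.mpr ⟨le_refl 0, hr⟩)]
        with δ hlog hδ
      obtain ⟨hδ0, hδr⟩ := hδ
      have hv : v6 n α c (f δ) = α * Real.log δ + 2 * c * δ - 10 * c ^ 2 * δ ^ 2 := by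
        rw [v6, hnorm, abs_of_pos hδ0]
        simp [hfdef, EuclideanSpace.single_apply]
      rw [hv]
      have h1 : α * Real.log δ < m := by
        have h2 := mul_lt_mul_of_pos_left hlog hα
        have heq : α * (m / α) = m := by field_simp
        linarith
      nlinarith [sq_nonneg δ, hδ0.le]
    exact htend.frequently hval.frequently
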